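/- Let D be a digraph, let v ∈ V(D), let A ⊆ V(D)∖{v}, and let k ∈ ℕ. Then either there are k distinct v-A-dipaths in D which pairwise intersect only in the vertex v, or there is a set K ⊆ V(D)∖{v} with |K| < k such that in D − K there is no directed path starting at v and ending in A. -/

import Mathlib

/- Common definitions: digraphs as irreflexive-in-intent relations `V → V → Prop`,
   directed paths as nonempty duplicate-free lists of vertices,
   subdivisions, gadgets, alternating paths and chains, following
   "Subdivisions in digraphs of large out-degree or large dichromatic number". -/

namespace Paper

variable {V : Type*}

/-- `p` is a directed path in the digraph `D`: a nonempty list of pairwise distinct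
vertices in which consecutive vertices are joined by an arc of `D`.
Its length (number of arcs) is `p.length - 1`. -/
def IsDipathList (D : V → V → Prop) (p : List V) : Prop :=
  p ≠ [] ∧ p.Nodup ∧ p.Chain' D

/-- The out-degree of a vertex. -/
noncomputable def outDeg (D : V → V → Prop) (v : V) : ℕ :=
  Set.ncard {w | D v w}

/-- The digraph `D` contains a subdivision of the digraph `F`: there is an injective
embedding `φ` of the branch vertices and, for every arc `(x,y)` of `F`, a directed path
in `D` from `φ x` to `φ y` of length at least one, such that the internal vertices of
these paths avoid the branch vertices and the paths of distinct arcs are internally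
vertex-disjoint. -/
def ContainsSubdivisionOf {W : Type*} (D : V → V → Prop) (F : W → W → Prop) : Prop :=
  ∃ (φ : W → V) (P : W → W → List V),
    Function.Injective φ ∧
    (∀ ⦃x y⦄, F x y → IsDipathList D (P x y) ∧ (P x y).head? = some (φ x) ∧
      (P x y).getLast? = some (φ y) ∧ 2 ≤ (P x y).length ∧
      ∀ z ∈ (P x y).tail.dropLast, ∀ w, φ w ≠ z) ∧
    (∀ ⦃x y x' y'⦄, F x y → F x' y' → (x, y) ≠ (x', y') →
      ∀ z ∈ (P x y).tail.dropLast, z ∉ P x' y')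

/-- As `ContainsSubdivisionOf`, but moreover the subdivision spans exactly
the vertex set `S`. -/
def SpansSubdivisionOf {W : Type*} (D : V → V → Prop) (S : Set V) (F : W → W → Prop) : Prop :=
  ∃ (φ : W → V) (P : W → W → List V),
    Function.Injective φ ∧
    (∀ ⦃x y⦄, F x y → IsDipathList D (P x y) ∧ (P x y).head? = some (φ x) ∧
      (P x y).getLast? = some (φ y) ∧ 2 ≤ (P x y).length ∧
      ∀ z ∈ (P x y).tail.dropLast, ∀ w, φ w ≠ z) ∧
    (∀ ⦃x y x' y'⦄, F x y → F x' y' → (x, y) ≠ (x', y') →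
      ∀ z ∈ (P x y).tail.dropLast, z ∉ P x' y') ∧
    S = Set.range φ ∪ {z | ∃ x y, F x y ∧ z ∈ P x y}

/-- The biorientation of the triangle minus one arc: vertices `0,1,2` and arcs
`(0,1),(1,0),(1,2),(2,1),(0,2)`. -/
def K3e : Fin 3 → Fin 3 → Prop := fun x y =>
  (x, y) = (0, 1) ∨ (x, y) = (1, 0) ∨ (x, y) = (1, 2) ∨ (x, y) = (2, 1) ∨ (x, y) = (0, 2)

/-- The biorientation of the complete graph on four vertices. -/
def K4bi : Fin 4 → Fin 4 → Prop := fun x y => x ≠ y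

/-- The biorientation of the star with four edges (center `0`). -/
def S4bi : Fin 5 → Fin 5 → Prop := fun x y => x ≠ y ∧ (x = 0 ∨ y = 0)

/-- The orientation of the cycle of length `ℓ` (vertex set `ZMod ℓ`) determined by
`σ`: the edge `{x, x+1}` is oriented from `x` to `x+1` if `σ x = true`, and from
`x+1` to `x` otherwise. -/
def CycleOrientation (ℓ : ℕ) (σ : ZMod ℓ → Bool) : ZMod ℓ → ZMod ℓ → Prop :=
  fun x y => (σ x = true ∧ y = x + 1) ∨ (σ y = false ∧ x = y + 1)

/-- The oriented cycle `C_{a,b}` on `2ab` vertices: going around the cycle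
`ZMod (2ab)`, the arcs of the `j`-th block of `b` consecutive edges are oriented
forwards for even `j` and backwards for odd `j`; its sources are `s_j = 2bj`
and its sinks are `t_j = 2bj + b`, joined by `2a` internally disjoint directed
paths of length `b` each. -/
def Cab (a b : ℕ) : ZMod (2 * a * b) → ZMod (2 * a * b) → Prop := fun x y =>
  ∃ i : ℕ, i < 2 * a * b ∧
    (((i / b) % 2 = 0 ∧ x = (i : ZMod (2 * a * b)) ∧ y = ((i + 1 : ℕ) : ZMod (2 * a * b))) ∨
     ((i / b) % 2 = 1 ∧ x = ((i + 1 : ℕ) : ZMod (2 * a * b)) ∧ y = (i : ZMod (2 * a * b))))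

/-- The directed girth of `D` is at least `g`: every directed cycle
(a nonempty duplicate-free list `v :: p` with consecutive arcs and an arc from the
last vertex back to `v`) has length at least `g`. -/
def DirGirthGE (D : V → V → Prop) (g : ℕ) : Prop :=
  ∀ (v : V) (p : List V), (v :: p).Nodup → List.Chain D v (p ++ [v]) → g ≤ p.length + 1

/-- `D` is strongly connected. -/
def StronglyConnected (D : V → V → Prop) : Prop :=
  ∀ u v : V, Relation.ReflTransGen D u v

/-- `D` is strongly `k`-arc-connected: after deleting any set of at most `k-1` arcs,
the digraph remains strongly connected. -/
def StronglyArcConnected (D : V → V → Prop) (k : ℕ) : Prop :=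
  ∀ E : Finset (V × V), E.card < k →
    StronglyConnected (fun u v => D u v ∧ (u, v) ∉ E)

/-- `x` and `y` are consecutive (in this order) in the list `l`. -/
def adjIn (l : List V) (x y : V) : Prop := ∃ l₁ l₂, l = l₁ ++ x :: y :: l₂

/-- A type-I gadget in `D`: a directed cycle `p, q, rest…` of length at least `g`
through the arc `(p,q)`. -/
structure TypeIGadget (D : V → V → Prop) (g : ℕ) where
  p : V
  q : V
  rest : List V
  nodup : (p :: q :: rest).Nodup
  chain : List.Chain D p (q :: (rest ++ [p]))
  glen : g ≤ rest.length + 2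

def TypeIGadget.verts {D : V → V → Prop} {g : ℕ} (G : TypeIGadget D g) : Set V :=
  {x | x ∈ G.p :: G.q :: G.rest}

def TypeIGadget.arcs {D : V → V → Prop} {g : ℕ} (G : TypeIGadget D g) : V → V → Prop :=
  adjIn (G.p :: G.q :: (G.rest ++ [G.p]))

/-- A basic type-II gadget in `D` (with girth parameter `b`): vertices `p, q, r` and a
directed path `P₁` from `r` to `p` of length at least `2b² + b - 2` avoiding `q`,
all of whose vertices send an arc to `q`. -/
structure BasicIIGadget (D : V → V → Prop) (b : ℕ) where
  p : V
  q : V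
  r : V
  P₁ : List V
  path₁ : IsDipathList D P₁
  first₁ : P₁.head? = some r
  last₁ : P₁.getLast? = some p
  len₁ : 2 * b ^ 2 + b - 1 ≤ P₁.length
  hq : q ∉ P₁
  toq : ∀ x ∈ P₁, D x q

def BasicIIGadget.verts {D : V → V → Prop} {b : ℕ} (G : BasicIIGadget D b) : Set V :=
  insert G.q {x | x ∈ G.P₁}

def BasicIIGadget.arcs {D : V → V → Prop} {b : ℕ} (G : BasicIIGadget D b) :
    V → V → Prop :=
  fun x y => adjIn G.P₁ x y ∨ (x ∈ G.P₁ ∧ y = G.q)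

/-- An extended type-II gadget: a basic type-II gadget together with a directed path
`P₂` of length at least `b` ending at `r`, meeting `P₁` only in `r` and avoiding `q`,
such that either the first vertex of `P₂` sends an arc to the second vertex of `P₁`,
or some vertex of `P₁` other than `r` sends an arc to the first vertex of `P₂`. -/
structure ExtIIGadget (D : V → V → Prop) (b : ℕ) where
  p : V
  q : V
  r : V
  P₁ : List V
  path₁ : IsDipathList D P₁
  first₁ : P₁.head? = some r
  last₁ : P₁.getLast? = some p
  len₁ : 2 * b ^ 2 + b - 1 ≤ P₁.length
  hq : q ∉ P₁
  toq : ∀ x ∈ P₁, D x q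
  P₂ : List V
  path₂ : IsDipathList D P₂
  last₂ : P₂.getLast? = some r
  len₂ : b + 1 ≤ P₂.length
  inter : ∀ x ∈ P₁, x ∈ P₂ → x = r
  hq₂ : q ∉ P₂
  extra : (∃ z y, P₂.head? = some z ∧ P₁[1]? = some y ∧ D z y) ∨
          (∃ w z, w ∈ P₁ ∧ w ≠ r ∧ P₂.head? = some z ∧ D w z)

def ExtIIGadget.verts {D : V → V → Prop} {b : ℕ} (G : ExtIIGadget D b) : Set V :=
  insert G.q ({x | x ∈ G.P₁} ∪ {x | x ∈ G.P₂})

def ExtIIGadget.arcs {D : V → V → Prop} {b : ℕ} (G : ExtIIGadget D b) : V → V → Prop :=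
  fun x y => adjIn G.P₁ x y ∨ (x ∈ G.P₁ ∧ y = G.q) ∨ adjIn G.P₂ x y ∨
    (D x y ∧ ((G.P₂.head? = some x ∧ G.P₁[1]? = some y) ∨
              (x ∈ G.P₁ ∧ x ≠ G.r ∧ G.P₂.head? = some y)))

/-- A type-III gadget: vertices `p, q, r`, the arc `(p,q)`, and two internally
vertex-disjoint directed paths `P₁ : p → r` and `P₂ : q → r`, each of length at
least `2b - 1`. -/
structure TypeIIIGadget (D : V → V → Prop) (b : ℕ) where
  p : V
  q : V
  r : V
  arc : D p q
  P₁ : List V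
  P₂ : List V
  path₁ : IsDipathList D P₁
  path₂ : IsDipathList D P₂
  first₁ : P₁.head? = some p
  first₂ : P₂.head? = some q
  last₁ : P₁.getLast? = some r
  last₂ : P₂.getLast? = some r
  len₁ : 2 * b ≤ P₁.length
  len₂ : 2 * b ≤ P₂.length
  inter : ∀ x ∈ P₁, x ∈ P₂ → x = r

def TypeIIIGadget.verts {D : V → V → Prop} {b : ℕ} (G : TypeIIIGadget D b) : Set V :=
  {x | x ∈ G.P₁} ∪ {x | x ∈ G.P₂}

def TypeIIIGadget.arcs {D : V → V → Prop} {b : ℕ} (G : TypeIIIGadget D b) :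
    V → V → Prop :=
  fun x y => (x = G.p ∧ y = G.q) ∨ adjIn G.P₁ x y ∨ adjIn G.P₂ x y

/-- A trivial gadget: just the arc `(p,q)`. -/
structure TrivGadget (D : V → V → Prop) where
  p : V
  q : V
  arc : D p q

def TrivGadget.verts {D : V → V → Prop} (G : TrivGadget D) : Set V := {G.p, G.q}

def TrivGadget.arcs {D : V → V → Prop} (G : TrivGadget D) : V → V → Prop :=
  fun x y => x = G.p ∧ y = G.q

/-- An `(a,b)`-alternating path in `D` (with 0-based indexing): vertices
`s 0, …, s (a-1)`, `t 0, …, t (a-1)` and pairwise internally disjoint directed paths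
`Q i : s i → t i` and `Q' i : s (i+1) → t i`, forming an oriented path; every `Q' i`
and every `Q i` with `0 < i < a - 1` has length at least `b` (`Q 0` and `Q (a-1)`
may even be single vertices). -/
structure AltPath (D : V → V → Prop) (a b : ℕ) where
  s : Fin a → V
  t : Fin a → V
  Q : Fin a → List V
  Q' : Fin (a - 1) → List V
  path_Q : ∀ i, IsDipathList D (Q i)
  first_Q : ∀ i, (Q i).head? = some (s i)
  last_Q : ∀ i, (Q i).getLast? = some (t i)
  path_Q' : ∀ i, IsDipathList D (Q' i)
  first_Q' : ∀ i : Fin (a - 1),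
    (Q' i).head? = some (s ⟨i.val + 1, by have := i.isLt; omega⟩)
  last_Q' : ∀ i : Fin (a - 1),
    (Q' i).getLast? = some (t ⟨i.val, by have := i.isLt; omega⟩)
  len_Q : ∀ i : Fin a, 0 < i.val → i.val < a - 1 → b + 1 ≤ (Q i).length
  len_Q' : ∀ i, b + 1 ≤ (Q' i).length
  disj_QQ : ∀ i j : Fin a, i ≠ j → ∀ x ∈ Q i, x ∉ Q j
  disj_Q'Q' : ∀ i j : Fin (a - 1), i ≠ j → ∀ x ∈ Q' i, x ∉ Q' j
  disj_QQ' : ∀ (i : Fin a) (j : Fin (a - 1)), ∀ x ∈ Q i, x ∈ Q' j →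
    (j.val = i.val ∧ x = t i) ∨ (i.val = j.val + 1 ∧ x = s i)

def AltPath.verts {D : V → V → Prop} {a b : ℕ} (R : AltPath D a b) : Set V :=
  {x | (∃ i, x ∈ R.Q i) ∨ (∃ i, x ∈ R.Q' i)}

/-- A strong alternating path: additionally `Q 0` and `Q (a-1)` (hence all `Q i`)
have length at least `b`. -/
def AltPath.Strong {D : V → V → Prop} {a b : ℕ} (R : AltPath D a b) : Prop :=
  ∀ i, b + 1 ≤ (R.Q i).length

def AltPath.arcs {D : V → V → Prop} {a b : ℕ} (R : AltPath D a b) : V → V → Prop :=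
  fun x y => (∃ i, adjIn (R.Q i) x y) ∨ (∃ i, adjIn (R.Q' i) x y)

/-- A gadget allowed in a chain: type I (with `g = 4b²`), basic type II, or type III. -/
inductive ChainGadget (D : V → V → Prop) (b : ℕ) where
  | I : TypeIGadget D (4 * b ^ 2) → ChainGadget D b
  | II : BasicIIGadget D b → ChainGadget D b
  | III : TypeIIIGadget D b → ChainGadget D b

def ChainGadget.pp {D : V → V → Prop} {b : ℕ} : ChainGadget D b → V
  | .I G => G.p
  | .II G => G.p
  | .III G => G.p

def ChainGadget.qq {D : V → V → Prop} {b : ℕ} : ChainGadget D b → V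
  | .I G => G.q
  | .II G => G.q
  | .III G => G.q

def ChainGadget.verts {D : V → V → Prop} {b : ℕ} : ChainGadget D b → Set V
  | .I G => G.verts
  | .II G => G.verts
  | .III G => G.verts

def ChainGadget.arcs {D : V → V → Prop} {b : ℕ} : ChainGadget D b → V → V → Prop
  | .I G => G.arcs
  | .II G => G.arcs
  | .III G => G.arcs

/-- A chain in `D`: a directed path (spine) `v 0, …, v m`, a set `A2` of spine arcs,
and a gadget for every arc in `A2` (arcs outside `A2` form `A1` and carry trivial
gadgets), such that each gadget has the endpoints of its arc as designated vertices,
meets the spine only in these two vertices, and two distinct gadgets meet only in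
spine vertices. -/
structure GChain (D : V → V → Prop) (b m : ℕ) where
  v : Fin (m + 1) → V
  inj : Function.Injective v
  spine : ∀ i : Fin m, D (v i.castSucc) (v i.succ)
  A2 : Finset (Fin m)
  gad : (i : Fin m) → i ∈ A2 → ChainGadget D b
  hp : ∀ (i : Fin m) (hi : i ∈ A2), (gad i hi).pp = v i.castSucc
  hq : ∀ (i : Fin m) (hi : i ∈ A2), (gad i hi).qq = v i.succ
  hspine : ∀ (i : Fin m) (hi : i ∈ A2) (j : Fin (m + 1)),
    v j ∈ (gad i hi).verts → j = i.castSucc ∨ j = i.succ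
  hdisj : ∀ (i : Fin m) (hi : i ∈ A2) (j : Fin m) (hj : j ∈ A2), i ≠ j →
    ∀ x, x ∈ (gad i hi).verts → x ∈ (gad j hj).verts → ∃ k, x = v k

def GChain.verts {D : V → V → Prop} {b m : ℕ} (C : GChain D b m) : Set V :=
  Set.range C.v ∪ {x | ∃ (i : Fin m) (hi : i ∈ C.A2), x ∈ (C.gad i hi).verts}

def GChain.arcs {D : V → V → Prop} {b m : ℕ} (C : GChain D b m) : V → V → Prop :=
  fun x y => (∃ i : Fin m, x = C.v i.castSucc ∧ y = C.v i.succ) ∨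
    (∃ (i : Fin m) (hi : i ∈ C.A2), (C.gad i hi).arcs x y)

/-- The vertex set of the gadget `G_e` sitting on the `i`-th spine arc
(the trivial gadget for arcs of `A1`). -/
def GChain.gadVerts {D : V → V → Prop} {b m : ℕ} (C : GChain D b m) (i : Fin m) :
    Set V :=
  if h : i ∈ C.A2 then (C.gad i h).verts else {C.v i.castSucc, C.v i.succ}

/-- An arbitrary gadget: trivial, type I (with `g = 4b²`), basic or extended type II,
or type III. -/
inductive GadgetAny (D : V → V → Prop) (b : ℕ) where
  | triv : TrivGadget D → GadgetAny D b
  | I : TypeIGadget D (4 * b ^ 2) → GadgetAny D b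
  | II : BasicIIGadget D b → GadgetAny D b
  | IIext : ExtIIGadget D b → GadgetAny D b
  | III : TypeIIIGadget D b → GadgetAny D b

def GadgetAny.pp {D : V → V → Prop} {b : ℕ} : GadgetAny D b → V
  | .triv G => G.p
  | .I G => G.p
  | .II G => G.p
  | .IIext G => G.p
  | .III G => G.p

def GadgetAny.qq {D : V → V → Prop} {b : ℕ} : GadgetAny D b → V
  | .triv G => G.q
  | .I G => G.q
  | .II G => G.q
  | .IIext G => G.q
  | .III G => G.q

def GadgetAny.verts {D : V → V → Prop} {b : ℕ} : GadgetAny D b → Set V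
  | .triv G => G.verts
  | .I G => G.verts
  | .II G => G.verts
  | .IIext G => G.verts
  | .III G => G.verts

def GadgetAny.arcs {D : V → V → Prop} {b : ℕ} : GadgetAny D b → V → V → Prop
  | .triv G => G.arcs
  | .I G => G.arcs
  | .II G => G.arcs
  | .IIext G => G.arcs
  | .III G => G.arcs

end Paper

section ChainShim
set_option linter.deprecated false
variable {α : Type*} {R S : α → α → Prop}

theorem List.chain'_nil : List.Chain' R [] := List.IsChain.nil
theorem List.chain'_singleton (a : α) : List.Chain' R [a] := List.IsChain.singleton a
theorem List.chain'_cons {a b : α} {l : List α} :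
    List.Chain' R (a :: b :: l) ↔ R a b ∧ List.Chain' R (b :: l) := List.isChain_cons_cons
theorem List.chain'_cons' {x : α} {l : List α} :
    List.Chain' R (x :: l) ↔ (∀ y ∈ l.head?, R x y) ∧ List.Chain' R l := List.isChain_cons
theorem List.chain'_append {l₁ l₂ : List α} :
    List.Chain' R (l₁ ++ l₂) ↔ List.Chain' R l₁ ∧ List.Chain' R l₂ ∧
      ∀ x ∈ l₁.getLast?, ∀ y ∈ l₂.head?, R x y := List.isChain_append
theorem List.Chain'.imp (H : ∀ ⦃a b : α⦄, R a b → S a b) {l : List α}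
    (h : List.Chain' R l) : List.Chain' S l := List.IsChain.imp H h
theorem List.Chain'.tail {l : List α} (h : List.Chain' R l) : List.Chain' R l.tail :=
  List.IsChain.tail h

end ChainShim

namespace MengerAux
variable {V : Type*}
open List

lemma getLast?_cons_of_ne_nil (b : V) {p : List V} (h : p ≠ []) :
    (b :: p).getLast? = p.getLast? := by
  rw [show b :: p = [b] ++ p from rfl, getLast?_append,
    Option.or_of_isSome (by simpa using h)]

lemma dropLast_cons_of_ne_nil' (b : V) {p : List V} (h : p ≠ []) :
    (b :: p).dropLast = b :: p.dropLast := by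
  cases p with
  | nil => exact absurd rfl h
  | cons c q => rfl

lemma mem_dropLast_or {l : List V} (hne : l ≠ []) {z : V} (hz : z ∈ l) :
    z ∈ l.dropLast ∨ l.getLast? = some z := by
  conv at hz => rw [← dropLast_append_getLast hne]
  rcases mem_append.mp hz with h | h
  · exact Or.inl h
  · right
    simp only [mem_singleton] at h
    rw [getLast?_eq_getLast hne, h]

lemma chain'_strengthen {R S : V → V → Prop} :
    ∀ l : List V, l.Chain' R → (∀ a ∈ l, ∀ b ∈ l.tail, R a b → S a b) → l.Chain' S
  | [], _, _ => chain'_nil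
  | [_], _, _ => chain'_singleton _
  | a :: b :: t, h, h2 => by
      rw [chain'_cons] at h ⊢
      exact ⟨h2 a (by simp) b (by simp) h.1,
        chain'_strengthen (b :: t) h.2
          (fun x hx y hy hr => h2 x (mem_cons_of_mem _ hx) y (mem_cons_of_mem _ hy) hr)⟩

lemma not_chain'_decomp {R S : V → V → Prop} :
    ∀ l : List V, l.Chain' R → ¬ l.Chain' S →
      ∃ a b l₁ l₂, l = l₁ ++ a :: b :: l₂ ∧ R a b ∧ ¬ S a b
  | [], _, h => absurd chain'_nil h
  | [a], _, h => absurd (chain'_singleton a) h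
  | a :: b :: t, h, h2 => by
      rw [chain'_cons] at h
      by_cases hc : Chain' S (b :: t)
      · refine ⟨a, b, [], t, rfl, h.1, fun hs => h2 (chain'_cons.mpr ⟨hs, hc⟩)⟩
      · obtain ⟨x, y, l₁, l₂, he, hr, hs⟩ := not_chain'_decomp (b :: t) h.2 hc
        exact ⟨x, y, a :: l₁, l₂, by rw [cons_append, ← he], hr, hs⟩

lemma exists_dup_decomp : ∀ l : List V, ¬ l.Nodup →
    ∃ (a : V) (l₁ l₂ l₃ : List V), l = l₁ ++ a :: l₂ ++ a :: l₃
  | [], h => absurd nodup_nil h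
  | b :: t, h => by
      by_cases hb : b ∈ t
      · obtain ⟨s, u, rfl⟩ := append_of_mem hb
        exact ⟨b, [], s, u, rfl⟩
      · have ht : ¬ t.Nodup := fun hn => h (nodup_cons.mpr ⟨hb, hn⟩)
        obtain ⟨a, l₁, l₂, l₃, rfl⟩ := exists_dup_decomp t ht
        exact ⟨a, b :: l₁, l₂, l₃, rfl⟩

lemma walk_to_path (D : V → V → Prop) : ∀ (n : ℕ) (l : List V), l.length ≤ n → l ≠ [] →
    l.Chain' D →
    ∃ p : List V, p ≠ [] ∧ p.Nodup ∧ p.Chain' D ∧ p.head? = l.head? ∧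
      p.getLast? = l.getLast? ∧ ∀ x ∈ p, x ∈ l := by
  intro n
  induction n with
  | zero =>
    intro l hl hne
    rw [Nat.le_zero, length_eq_zero_iff] at hl
    exact absurd hl hne
  | succ n ih =>
    intro l hl hne hc
    by_cases hd : l.Nodup
    · exact ⟨l, hne, hd, hc, rfl, rfl, fun x hx => hx⟩
    · obtain ⟨a, l₁, l₂, l₃, rfl⟩ := exists_dup_decomp _ hd
      have hc1 : Chain' D (l₁ ++ a :: l₂ ++ a :: l₃) := hc
      rw [show l₁ ++ a :: l₂ ++ a :: l₃ = l₁ ++ ((a :: l₂) ++ a :: l₃) by simp,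
        chain'_append, chain'_append] at hc1
      have hc' : Chain' D (l₁ ++ a :: l₃) := by
        rw [chain'_append]
        refine ⟨hc1.1, hc1.2.1.2.1, ?_⟩
        intro x hx y hy
        exact hc1.2.2 x hx y (by simpa using hy)
      have hlen : (l₁ ++ a :: l₃).length ≤ n := by
        have := hl
        simp only [length_append, length_cons] at this ⊢
        omega
      obtain ⟨p, hp1, hp2, hp3, hp4, hp5, hp6⟩ :=
        ih (l₁ ++ a :: l₃) hlen (by simp) hc'
      refine ⟨p, hp1, hp2, hp3, ?_, ?_, ?_⟩
      · rw [hp4, head?_append, head?_append]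
        simp [Option.or_assoc]
      · rw [hp5, getLast?_append, getLast?_append]
        have hs : ((a :: l₃ : List V).getLast?).isSome := by simp
        rw [Option.or_of_isSome hs, Option.or_of_isSome hs]
      · intro x hx
        have := hp6 x hx
        simp only [mem_append, mem_cons] at this ⊢
        tauto

lemma first_hit (T : Set V) : ∀ l : List V, (∃ z ∈ l, z ∈ T) →
    ∃ p l₂ a, l = p ++ l₂ ∧ p ≠ [] ∧ p.getLast? = some a ∧ a ∈ T ∧ p.head? = l.head? ∧
      ∀ z ∈ p.dropLast, z ∉ T
  | [], h => by simp at h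
  | b :: t, h => by
      by_cases hb : b ∈ T
      · exact ⟨[b], t, b, rfl, by simp, by simp, hb, by simp, by simp⟩
      · have ht : ∃ z ∈ t, z ∈ T := by
          rcases h with ⟨z, hz, hzT⟩
          rcases mem_cons.mp hz with rfl | hz'
          · exact absurd hzT hb
          · exact ⟨z, hz', hzT⟩
        obtain ⟨p, l₂, a, rfl, hne, hlast, haT, hhead, hdl⟩ := first_hit T t ht
        refine ⟨b :: p, l₂, a, rfl, by simp, ?_, haT, by simp, ?_⟩
        · rw [getLast?_cons_of_ne_nil b hne, hlast]
        · intro z hz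
          rw [dropLast_cons_of_ne_nil' b hne] at hz
          rcases mem_cons.mp hz with rfl | hz'
          · exact hb
          · exact hdl z hz'

lemma last_hit (T : Set V) : ∀ l : List V, (∃ z ∈ l, z ∈ T) →
    ∃ l₁ s w, l = l₁ ++ s ∧ s.head? = some w ∧ w ∈ T ∧ ∀ z ∈ s.tail, z ∉ T
  | [], h => by simp at h
  | b :: t, h => by
      by_cases ht : ∃ z ∈ t, z ∈ T
      · obtain ⟨l₁, s, w, rfl, h1, h2, h3⟩ := last_hit T t ht
        exact ⟨b :: l₁, s, w, rfl, h1, h2, h3⟩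
      · have hb : b ∈ T := by
          rcases h with ⟨z, hz, hzT⟩
          rcases mem_cons.mp hz with rfl | hz'
          · exact hzT
          · exact absurd ⟨z, hz', hzT⟩ ht
        push_neg at ht
        exact ⟨[], b :: t, b, rfl, rfl, hb, ht⟩


lemma mem_dropLast_of_mem_tail_dropLast {l : List V} {z : V} (h : z ∈ l.tail.dropLast) :
    z ∈ l.dropLast := by
  cases l with
  | nil => simp at h
  | cons b t =>
    cases t with
    | nil => simp at h
    | cons c q =>
      rw [dropLast_cons_of_ne_nil' b (by simp)]
      exact mem_cons_of_mem _ h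

end MengerAux

namespace MengerProof

variable {V : Type*}

open List

/-- `K` separates `v` from `A` in `D`. -/
def Sep (D : V → V → Prop) (v : V) (A : Set V) (K : Finset V) : Prop :=
  v ∉ K ∧ ¬ ∃ P : List V, Paper.IsDipathList D P ∧ P.head? = some v ∧
    (∀ x ∈ P, x ∉ K) ∧ ∃ a ∈ A, P.getLast? = some a

lemma base_case [Fintype V] (v : V) (k : ℕ) (D : V → V → Prop)
    (hnoarc : ¬ ∃ x y, D x y ∧ x ≠ v ∧ y ≠ v)
    (A : Set V) (hA : v ∉ A) (hsep : ∀ K : Finset V, Sep D v A K → k ≤ K.card) :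
    ∃ P : Fin k → List V,
      (∀ i, Paper.IsDipathList D (P i) ∧ (P i).head? = some v ∧
        ∃ a ∈ A, (P i).getLast? = some a) ∧
      (∀ i j, i ≠ j → ∀ x ∈ P i, x ∈ P j → x = v) := by
  classical
  set B : Finset V := Finset.univ.filter (fun a => a ∈ A ∧ D v a) with hB
  have hmemB : ∀ a, a ∈ B ↔ a ∈ A ∧ D v a := by intro a; simp [hB]
  have hvB : v ∉ B := fun h => hA ((hmemB v).mp h).1
  have hSep : Sep D v A B := by
    refine ⟨hvB, ?_⟩
    rintro ⟨P, ⟨hPne, hPnd, hPch⟩, hPh, hPav, a, haA, hPl⟩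
    obtain ⟨t, rfl⟩ := head?_eq_some_iff.mp hPh
    cases t with
    | nil =>
      have hva : v = a := by simpa using hPl
      exact hA (by rw [hva]; exact haA)
    | cons w t' =>
      have hvw : D v w := (chain'_cons.mp hPch).1
      cases t' with
      | nil =>
        have haw : a = w := by
          have : w = a := by simpa using hPl
          exact this.symm
        exact hPav w (by simp) ((hmemB w).mpr ⟨haw ▸ haA, hvw⟩)
      | cons u t'' =>
        have hwu : D w u := (chain'_cons.mp (chain'_cons.mp hPch).2).1
        have hwv : w ≠ v := by
          intro h; subst h; simp [nodup_cons] at hPnd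
        have huv : u ≠ v := by
          intro h; subst h; simp [nodup_cons] at hPnd
        exact hnoarc ⟨w, u, hwu, hwv, huv⟩
  have hk : k ≤ B.card := hsep B hSep
  have hlen : k ≤ B.toList.length := by rwa [Finset.length_toList]
  set a : Fin k → V := fun i => B.toList.get ⟨i.val, lt_of_lt_of_le i.isLt hlen⟩ with ha
  have hamem : ∀ i, a i ∈ B := fun i => Finset.mem_toList.mp (List.get_mem _ _)
  have hainj : Function.Injective a := by
    intro i j h
    have := (B.nodup_toList.get_inj_iff).mp h
    exact Fin.ext (by simpa using congrArg Fin.val this)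
  have haA' : ∀ i, a i ∈ A := fun i => ((hmemB _).mp (hamem i)).1
  have haD : ∀ i, D v (a i) := fun i => ((hmemB _).mp (hamem i)).2
  have hav : ∀ i, a i ≠ v := fun i h => hA (h ▸ haA' i)
  refine ⟨fun i => [v, a i], fun i => ⟨⟨by simp, by simp [Ne.symm (hav i)],
    chain'_cons.mpr ⟨haD i, chain'_singleton _⟩⟩, rfl, ⟨a i, haA' i, by simp⟩⟩, ?_⟩
  intro i j hij z hzi hzj
  simp only [mem_cons, mem_singleton, not_mem_nil, or_false] at hzi hzj
  rcases hzi with rfl | rfl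
  · rfl
  · rcases hzj with h | h
    · exact h
    · exact absurd (hainj h.symm).symm hij

lemma exists_system [Fintype V] (v : V) (k : ℕ) :
    ∀ (n : ℕ) (D : V → V → Prop), (∀ u, ¬ D u u) →
    Set.ncard {p : V × V | D p.1 p.2 ∧ p.1 ≠ v} ≤ n →
    ∀ A : Set V, v ∉ A → (∀ K : Finset V, Sep D v A K → k ≤ K.card) →
    ∃ P : Fin k → List V,
      (∀ i, Paper.IsDipathList D (P i) ∧ (P i).head? = some v ∧
        ∃ a ∈ A, (P i).getLast? = some a) ∧
      (∀ i j, i ≠ j → ∀ x ∈ P i, x ∈ P j → x = v) := by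
  intro n
  induction n with
  | zero =>
    intro D hloop hcard A hA hsep
    refine base_case v k D ?_ A hA hsep
    rintro ⟨x, y, hxy, hxv, _⟩
    have hmem : ((x, y) : V × V) ∈ {p : V × V | D p.1 p.2 ∧ p.1 ≠ v} := ⟨hxy, hxv⟩
    have h0 : {p : V × V | D p.1 p.2 ∧ p.1 ≠ v} = ∅ :=
      (Set.ncard_eq_zero (Set.toFinite _)).mp (by omega)
    exact absurd (h0 ▸ hmem) (Set.notMem_empty _)
  | succ n ih =>
    intro D hloop hcard A hA hsep
    classical
    by_cases harc : ∃ x y, D x y ∧ x ≠ v ∧ y ≠ v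
    swap
    · exact base_case v k D harc A hA hsep
    obtain ⟨x, y, hxy, hxv, hyv⟩ := harc
    have hxy_ne : x ≠ y := fun h => hloop x (h ▸ hxy)
    set D' : V → V → Prop := fun u w => D u w ∧ (u, w) ≠ (x, y) with hD'def
    have hloop' : ∀ u, ¬ D' u u := fun u h => hloop u h.1
    have hcard' : Set.ncard {p : V × V | D' p.1 p.2 ∧ p.1 ≠ v} ≤ n := by
      have hsub : {p : V × V | D' p.1 p.2 ∧ p.1 ≠ v} ⊂ {p : V × V | D p.1 p.2 ∧ p.1 ≠ v} := by
        constructor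
        · rintro p ⟨⟨h1, _⟩, h2⟩; exact ⟨h1, h2⟩
        · intro hsub'
          exact (hsub' (show ((x, y) : V × V) ∈ _ from ⟨hxy, hxv⟩)).1.2 rfl
      have := Set.ncard_lt_ncard hsub (Set.toFinite _)
      omega
    by_cases hsep' : ∀ K : Finset V, Sep D' v A K → k ≤ K.card
    · obtain ⟨P, hP, hPd⟩ := ih D' hloop' hcard' A hA hsep'
      exact ⟨P, fun i => ⟨⟨(hP i).1.1, (hP i).1.2.1,
        (hP i).1.2.2.imp (fun _ _ h => h.1)⟩, (hP i).2.1, (hP i).2.2⟩, hPd⟩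
    push_neg at hsep'
    obtain ⟨S, hS, hScard⟩ := hsep'
    have hvS : v ∉ S := hS.1
    have hxyPmem : ∀ P : List V, P.Chain' D → ¬ P.Chain' D' → x ∈ P ∧ y ∈ P := by
      intro P hch hnch
      obtain ⟨a', b', l₁, l₂, heq, hab, hnab⟩ := MengerAux.not_chain'_decomp P hch hnch
      have hab' : (a', b') = (x, y) := by by_contra h; exact hnab ⟨hab, h⟩
      have h1 : a' = x := congrArg Prod.fst hab'
      have h2 : b' = y := congrArg Prod.snd hab'
      constructor
      · rw [heq, ← h1]; simp
      · rw [heq, ← h2]; simp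
    have hSepTx : Sep D v A (insert x S) := by
      refine ⟨fun hmem => ?_, ?_⟩
      · rcases Finset.mem_insert.mp hmem with h | h
        · exact hxv h.symm
        · exact hvS h
      · rintro ⟨P, ⟨hPne, hPnd, hPch⟩, hPh, hPav, a, haA, hPl⟩
        by_cases hch : Chain' D' P
        · exact hS.2 ⟨P, ⟨hPne, hPnd, hch⟩, hPh,
            fun z hz hzS => hPav z hz (Finset.mem_insert_of_mem hzS), a, haA, hPl⟩
        · exact hPav x (hxyPmem P hPch hch).1 (Finset.mem_insert_self _ _)
    have hSepTy : Sep D v A (insert y S) := by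
      refine ⟨fun hmem => ?_, ?_⟩
      · rcases Finset.mem_insert.mp hmem with h | h
        · exact hyv h.symm
        · exact hvS h
      · rintro ⟨P, ⟨hPne, hPnd, hPch⟩, hPh, hPav, a, haA, hPl⟩
        by_cases hch : Chain' D' P
        · exact hS.2 ⟨P, ⟨hPne, hPnd, hch⟩, hPh,
            fun z hz hzS => hPav z hz (Finset.mem_insert_of_mem hzS), a, haA, hPl⟩
        · exact hPav y (hxyPmem P hPch hch).2 (Finset.mem_insert_self _ _)
    have hxS : x ∉ S := by
      intro h
      have := hsep _ hSepTx
      rw [Finset.insert_eq_self.mpr h] at this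
      omega
    have hyS : y ∉ S := by
      intro h
      have := hsep _ hSepTy
      rw [Finset.insert_eq_self.mpr h] at this
      omega
    have hTxcard : (insert x S).card = k := by
      have h1 := hsep _ hSepTx
      rw [Finset.card_insert_of_notMem hxS] at h1 ⊢
      omega
    have hTycard : (insert y S).card = k := by
      have h1 := hsep _ hSepTy
      rw [Finset.card_insert_of_notMem hyS] at h1 ⊢
      omega
    have hvTx : v ∉ (↑(insert x S) : Set V) := by
      intro h
      rcases (by simpa using h : v = x ∨ v ∈ S) with h' | h'
      · exact hxv h'.symm
      · exact hvS h'
    have hvTy : v ∉ (↑(insert y S) : Set V) := by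
      intro h
      rcases (by simpa using h : v = y ∨ v ∈ S) with h' | h'
      · exact hyv h'.symm
      · exact hvS h'
    -- System 1: paths from v to Tx in D'
    have hsepTx : ∀ K : Finset V, Sep D' v (↑(insert x S) : Set V) K → k ≤ K.card := by
      rintro K ⟨hvK, hKno⟩
      refine hsep K ⟨hvK, ?_⟩
      rintro ⟨P, ⟨hPne, hPnd, hPch⟩, hPh, hPav, a, haA, hPl⟩
      by_cases hch : Chain' D' P
      · have hhit : ∃ z ∈ P, z ∈ (↑(insert x S) : Set V) := by
          by_contra hno
          push_neg at hno
          refine hS.2 ⟨P, ⟨hPne, hPnd, hch⟩, hPh, fun z hz hzS => ?_, a, haA, hPl⟩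
          exact hno z hz (by simp [hzS])
        obtain ⟨p, l₂, b, heq, hpne, hplast, hbT, hphead, _⟩ :=
          MengerAux.first_hit _ P hhit
        exact hKno ⟨p, ⟨hpne, (nodup_append.mp (heq ▸ hPnd)).1,
          (chain'_append.mp (heq ▸ hch)).1⟩, hphead.trans hPh,
          fun z hz => hPav z (heq ▸ mem_append_left _ hz), b, hbT, hplast⟩
      · obtain ⟨a', b', l₁, l₂, heq, hab, hnab⟩ := MengerAux.not_chain'_decomp P hPch hch
        have hab' : (a', b') = (x, y) := by by_contra h; exact hnab ⟨hab, h⟩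
        have ha'x : a' = x := congrArg Prod.fst hab'
        have hb'y : b' = y := congrArg Prod.snd hab'
        have heq2 : P = (l₁ ++ [a']) ++ b' :: l₂ := by rw [heq]; simp
        have hynl : b' ∉ l₁ ++ [a'] := by
          have hnd2 := heq2 ▸ hPnd
          exact fun hmem => (nodup_append.mp hnd2).2.2 _ hmem _ (by simp) rfl
        refine hKno ⟨l₁ ++ [a'], ⟨by simp, (nodup_append.mp (heq2 ▸ hPnd)).1, ?_⟩, ?_,
          fun z hz => hPav z (heq2 ▸ mem_append_left _ hz), a', ?_, getLast?_concat⟩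
        · refine MengerAux.chain'_strengthen _ (chain'_append.mp (heq2 ▸ hPch)).1 ?_
          intro a₁ ha₁ b₁ hb₁ hD₁
          refine ⟨hD₁, fun hpair => ?_⟩
          have hb₁y : b₁ = y := congrArg Prod.snd hpair
          exact hynl (by rw [hb'y, ← hb₁y]; exact mem_of_mem_tail hb₁)
        · rw [← hPh, heq2, head?_append, head?_append]
          simp [Option.or_assoc]
        · rw [ha'x]; simp
    obtain ⟨P0, hP0, hP0disj⟩ := ih D' hloop' hcard' _ hvTx hsepTx
    -- truncate at first Tx-hit
    have htr : ∀ i, ∃ (p : List V) (b : V), (∀ z ∈ p, z ∈ P0 i) ∧ p ≠ [] ∧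
        p.Nodup ∧ Chain' D' p ∧ p.head? = some v ∧ p.getLast? = some b ∧
        b ∈ insert x S ∧ ∀ z ∈ p.dropLast, z ∉ (↑(insert x S) : Set V) := by
      intro i
      obtain ⟨⟨hne, hnd, hch⟩, hh, a, haT, hl⟩ := hP0 i
      have hhit : ∃ z ∈ P0 i, z ∈ (↑(insert x S) : Set V) :=
        ⟨a, mem_of_mem_getLast? (by rw [hl]; rfl), haT⟩
      obtain ⟨p, l₂, b, heq, hpne, hplast, hbT, hphead, hpdrop⟩ :=
        MengerAux.first_hit _ _ hhit
      exact ⟨p, b, fun z hz => heq ▸ mem_append_left _ hz, hpne,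
        (nodup_append.mp (heq ▸ hnd)).1, (chain'_append.mp (heq ▸ hch)).1,
        hphead.trans hh, hplast, by simpa using hbT, hpdrop⟩
    choose P ε hPsub hPne hPnd hPch hPhead hPlast hεTx hPdrop using htr
    have hPdisj : ∀ i j, i ≠ j → ∀ z ∈ P i, z ∈ P j → z = v :=
      fun i j hij z hzi hzj => hP0disj i j hij z (hPsub i z hzi) (hPsub j z hzj)
    have hfactA : ∀ i z, z ∈ P i → z ∈ S → z = ε i := by
      intro i z hz hzS
      rcases MengerAux.mem_dropLast_or (hPne i) hz with h | h
      · exact absurd (by simp [hzS] : z ∈ (↑(insert x S) : Set V)) (hPdrop i z h)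
      · rw [hPlast i] at h
        exact (Option.some_inj.mp h).symm
    have hεP : ∀ i, ε i ∈ P i := fun i => mem_of_mem_getLast? (by rw [hPlast i]; rfl)
    have hεv : ∀ i, ε i ≠ v := by
      intro i h
      have := hεTx i
      rw [h] at this
      rcases Finset.mem_insert.mp this with h' | h'
      · exact hxv h'.symm
      · exact hvS h'
    have hεinj : Function.Injective ε := by
      intro i j h
      by_contra hij
      exact hεv i (hPdisj i j hij (ε i) (hεP i) (h ▸ hεP j))
    have hεsurj : ∀ t ∈ insert x S, ∃ i, ε i = t := by
      intro t ht
      have hsub : Finset.univ.image ε ⊆ insert x S := by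
        intro z hz
        obtain ⟨i, _, rfl⟩ := Finset.mem_image.mp hz
        exact hεTx i
      have hcard2 : (Finset.univ.image ε).card = k := by
        rw [Finset.card_image_of_injective _ hεinj]; simp
      have := Finset.eq_of_subset_of_card_le hsub (by rw [hcard2, hTxcard])
      rw [← this] at ht
      obtain ⟨i, _, rfl⟩ := Finset.mem_image.mp ht
      exact ⟨i, rfl⟩
    -- System 2: auxiliary digraph D''
    set D'' : V → V → Prop := fun u w =>
      (u = v ∧ w ∈ insert y S) ∨ (u ≠ v ∧ D u w ∧ (u, w) ≠ (x, y)) with hD''def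
    have hloop'' : ∀ u, ¬ D'' u u := by
      rintro u (⟨rfl, h⟩ | ⟨_, h, _⟩)
      · rcases Finset.mem_insert.mp h with h' | h'
        · exact hyv h'.symm
        · exact hvS h'
      · exact hloop u h
    have hcard'' : Set.ncard {p : V × V | D'' p.1 p.2 ∧ p.1 ≠ v} ≤ n := by
      have hsub : {p : V × V | D'' p.1 p.2 ∧ p.1 ≠ v} ⊂ {p : V × V | D p.1 p.2 ∧ p.1 ≠ v} := by
        constructor
        · rintro p ⟨(⟨h1, _⟩ | ⟨_, h1, _⟩), h2⟩
          · exact absurd h1 h2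
          · exact ⟨h1, h2⟩
        · intro hsub'
          rcases hsub' (show ((x, y) : V × V) ∈ _ from ⟨hxy, hxv⟩) with ⟨(⟨h1, _⟩ | ⟨_, _, h1⟩), _⟩
          · exact hxv h1
          · exact h1 rfl
      have := Set.ncard_lt_ncard hsub (Set.toFinite _)
      omega
    have hsepD'' : ∀ K : Finset V, Sep D'' v A K → k ≤ K.card := by
      rintro K ⟨hvK, hKno⟩
      refine hsep K ⟨hvK, ?_⟩
      rintro ⟨P', ⟨hPne', hPnd', hPch'⟩, hPh', hPav', a, haA, hPl'⟩
      have hhit : ∃ z ∈ P', z ∈ (↑(insert y S) : Set V) := by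
        by_cases hch : Chain' D' P'
        · by_contra hno
          push_neg at hno
          refine hS.2 ⟨P', ⟨hPne', hPnd', hch⟩, hPh', fun z hz hzS => ?_, a, haA, hPl'⟩
          exact hno z hz (by simp [hzS])
        · exact ⟨y, (hxyPmem P' hPch' hch).2, by simp⟩
      obtain ⟨l₁, s, w, heq, hshead, hwT, hstail⟩ := MengerAux.last_hit _ P' hhit
      have hsne : s ≠ [] := by
        intro h; rw [h] at hshead; simp at hshead
      have hwv : w ≠ v := by
        intro h
        subst h
        exact hvTy hwT
      have hwmem : w ∈ insert y S := by simpa using hwT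
      have hvs : v ∉ s := by
        intro hvins
        rcases eq_or_ne l₁ [] with rfl | hl₁
        · rw [heq] at hPh'
          simp only [nil_append] at hPh'
          rw [hshead] at hPh'
          exact hwv (by injection hPh')
        · have hdisj := (nodup_append.mp (heq ▸ hPnd')).2.2
          have hvl₁ : v ∈ l₁ := by
            have hh : P'.head? = l₁.head? := by
              rw [heq, head?_append, Option.or_of_isSome (by rwa [isSome_head?])]
            exact mem_of_mem_head? (by rw [← hh, hPh']; rfl)
          exact hdisj _ hvl₁ _ hvins rfl
      have hchs : Chain' D s := (chain'_append.mp (heq ▸ hPch')).2.1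
      have hchs'' : Chain' D'' s := by
        refine MengerAux.chain'_strengthen _ hchs ?_
        intro a₁ ha₁ b₁ hb₁ hD₁
        refine Or.inr ⟨fun h => hvs (h ▸ ha₁), hD₁, fun hpair => ?_⟩
        have hb₁y : b₁ = y := congrArg Prod.snd hpair
        exact hstail b₁ hb₁ (by rw [hb₁y]; simp)
      have hchvs : Chain' D'' (v :: s) := by
        refine chain'_cons'.mpr ⟨?_, hchs''⟩
        intro b hb
        rw [hshead] at hb
        have hbw : b = w := by
          simp only [Option.mem_def, Option.some_inj] at hb
          exact hb.symm
        exact Or.inl ⟨rfl, by rw [hbw]; exact hwmem⟩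
      refine hKno ⟨v :: s, ⟨by simp, ?_, hchvs⟩, rfl, ?_, a, haA, ?_⟩
      · exact nodup_cons.mpr ⟨hvs, (nodup_append.mp (heq ▸ hPnd')).2.1⟩
      · intro z hz
        rcases mem_cons.mp hz with rfl | hz'
        · exact hvK
        · exact hPav' z (heq ▸ mem_append_right _ hz')
      · rw [MengerAux.getLast?_cons_of_ne_nil v hsne, ← hPl', heq, getLast?_append,
          Option.or_of_isSome (by rwa [getLast?_isSome])]
    obtain ⟨Q0, hQ0, hQ0disj⟩ := ih D'' hloop'' hcard'' A hA hsepD''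
    -- peel off the first vertex v of each Q0 i
    have hQdata : ∀ i, ∃ (R : List V) (t : V) (a : V), Q0 i = v :: R ∧ R ≠ [] ∧
        R.Nodup ∧ v ∉ R ∧ Chain' D' R ∧ R.head? = some t ∧ t ∈ insert y S ∧
        a ∈ A ∧ R.getLast? = some a := by
      intro i
      obtain ⟨⟨hne, hnd, hch⟩, hh, a, haA, hl⟩ := hQ0 i
      obtain ⟨R, hR⟩ := head?_eq_some_iff.mp hh
      have hRne : R ≠ [] := by
        rintro rfl
        rw [hR] at hl
        have : v = a := by simpa using hl
        exact hA (by rw [this]; exact haA)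
      have hnd' := hR ▸ hnd
      have hvR : v ∉ R := (nodup_cons.mp hnd').1
      have hch' := hR ▸ hch
      obtain ⟨hhead', hchR''⟩ := chain'_cons'.mp hch'
      obtain ⟨t, ht⟩ := Option.isSome_iff_exists.mp (isSome_head?.mpr hRne)
      have htT : t ∈ insert y S := by
        rcases hhead' t (by rw [ht]; rfl) with ⟨_, h⟩ | ⟨h, _, _⟩
        · exact h
        · exact absurd rfl h
      have hchR' : Chain' D' R := by
        refine MengerAux.chain'_strengthen _ hchR'' ?_
        rintro a₁ ha₁ b₁ _ (⟨h1, _⟩ | ⟨_, h2, h3⟩)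
        · exact absurd (h1 ▸ ha₁) hvR
        · exact ⟨h2, h3⟩
      exact ⟨R, t, a, hR, hRne, (nodup_cons.mp hnd').2, hvR, hchR', ht, htT, haA,
        by rw [← hl, hR, MengerAux.getLast?_cons_of_ne_nil v hRne]⟩
    choose R τ α hQcons hRne hRnd hRv hRch hτhead hτTy hαA hRlast using hQdata
    have hRmem : ∀ i z, z ∈ R i → z ∈ Q0 i := by
      intro i z hz; rw [hQcons i]; exact mem_cons_of_mem _ hz
    have hRdisj : ∀ i j, i ≠ j → ∀ z ∈ R i, z ∉ R j := by
      intro i j hij z hzi hzj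
      exact hRv i ((hQ0disj i j hij z (hRmem i z hzi) (hRmem j z hzj)) ▸ hzi)
    have hτR : ∀ i, τ i ∈ R i := fun i => mem_of_mem_head? (by rw [hτhead i]; rfl)
    have hτinj : Function.Injective τ := by
      intro i j h
      by_contra hij
      exact hRdisj i j hij (τ i) (hτR i) (h ▸ hτR j)
    have hτsurj : ∀ t ∈ insert y S, ∃ j, τ j = t := by
      intro t ht
      have hsub : Finset.univ.image τ ⊆ insert y S := by
        intro z hz
        obtain ⟨i, _, rfl⟩ := Finset.mem_image.mp hz
        exact hτTy i
      have hcard2 : (Finset.univ.image τ).card = k := by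
        rw [Finset.card_image_of_injective _ hτinj]; simp
      have := Finset.eq_of_subset_of_card_le hsub (by rw [hcard2, hTycard])
      rw [← this] at ht
      obtain ⟨i, _, rfl⟩ := Finset.mem_image.mp ht
      exact ⟨i, rfl⟩
    have hRTy : ∀ i z, z ∈ R i → z ∈ insert y S → z = τ i := by
      intro i z hz hzT
      obtain ⟨j, rfl⟩ := hτsurj z hzT
      by_contra hne'
      have hij : j ≠ i := fun h => hne' (by rw [h])
      exact hRdisj j i hij (τ j) (hτR j) hz
    have hRcons : ∀ i, R i = τ i :: (R i).tail := by
      intro i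
      obtain ⟨ys, h⟩ := head?_eq_some_iff.mp (hτhead i)
      rw [h]; rfl
    have hτtail : ∀ i, τ i ∉ (R i).tail := by
      intro i h
      have hnd := hRnd i
      rw [hRcons i] at hnd
      exact (nodup_cons.mp hnd).1 h
    have hRtailTy : ∀ i z, z ∈ (R i).tail → z ∉ (↑(insert y S) : Set V) := by
      intro i z hz hzT
      have hzR : z ∈ R i := by rw [hRcons i]; exact mem_cons_of_mem _ hz
      have := hRTy i z hzR (by simpa using hzT)
      exact hτtail i (this ▸ hz)
    -- the crossing lemma
    have hcross : ∀ i j z, z ∈ P i → z ∈ R j → z ∈ S := by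
      intro i j z hzP hzR
      by_contra hzS
      obtain ⟨l₁, l₂, heqP⟩ := append_of_mem hzP
      obtain ⟨m₁, m₂, heqR⟩ := append_of_mem hzR
      have heqP' : P i = (l₁ ++ [z]) ++ l₂ := by rw [heqP]; simp
      have heqR' : R j = (m₁ ++ [z]) ++ m₂ := by rw [heqR]; simp
      have hchp : Chain' D' (l₁ ++ [z]) := (chain'_append.mp (heqP' ▸ hPch i)).1
      have hchR2 : Chain' D' (z :: m₂) := (chain'_append.mp (heqR ▸ hRch j)).2.1
      have hchm : Chain' D' m₂ := (chain'_cons'.mp hchR2).2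
      have hjunc : ∀ b ∈ m₂.head?, D' z b := (chain'_cons'.mp hchR2).1
      set walk : List V := (l₁ ++ [z]) ++ m₂ with hwalk
      have hchw : Chain' D' walk := by
        refine chain'_append.mpr ⟨hchp, hchm, ?_⟩
        intro a₁ ha₁ b₁ hb₁
        rw [getLast?_concat] at ha₁
        have ha₁' : a₁ = z := by
          simp only [Option.mem_def, Option.some_inj] at ha₁
          exact ha₁.symm
        exact ha₁' ▸ hjunc b₁ hb₁
      have hwne : walk ≠ [] := by simp [hwalk]
      have hwhead : walk.head? = some v := by
        have h1 : (l₁ ++ [z]).head? = some v := by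
          have h2 := hPhead i
          rw [heqP, head?_append] at h2
          rw [head?_append]
          simpa using h2
        rw [hwalk, head?_append, Option.or_of_isSome (by rw [h1]; rfl)]
        exact h1
      have hwlast : walk.getLast? = (R j).getLast? := by
        rcases eq_or_ne m₂ [] with rfl | hm₂
        · rw [hwalk, append_nil, getLast?_concat, heqR', append_nil, getLast?_concat]
        · rw [hwalk, getLast?_append, Option.or_of_isSome (by rwa [getLast?_isSome]),
            heqR', getLast?_append, Option.or_of_isSome (by rwa [getLast?_isSome])]
      have havoid : ∀ u ∈ walk, u ∉ (↑S : Set V) := by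
        intro u hu huS
        rw [hwalk] at hu
        have huS' : u ∈ S := by simpa using huS
        rcases mem_append.mp hu with hu1 | hu2
        · rcases mem_append.mp hu1 with hu1' | hu1''
          · have huP : u ∈ P i := heqP ▸ mem_append_left _ hu1'
            rcases MengerAux.mem_dropLast_or (hPne i) huP with h | h
            · exact hPdrop i u h (by simp [huS'])
            · have huε : u = ε i := by
                rw [hPlast i] at h
                exact (Option.some_inj.mp h).symm
              have h2 : (P i).getLast? = (z :: l₂).getLast? := by
                rw [heqP, getLast?_append,
                  Option.or_of_isSome (by rw [getLast?_isSome]; simp)]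
              have hεtail : ε i ∈ z :: l₂ := by
                have h3 := hPlast i
                rw [h2] at h3
                exact mem_of_mem_getLast? (by rw [h3]; rfl)
              have hdisj := (nodup_append.mp (heqP ▸ hPnd i)).2.2
              exact hdisj _ (huε ▸ hu1') _ hεtail rfl
          · simp only [mem_singleton] at hu1''
            exact hzS (hu1'' ▸ huS')
        · have hutail : u ∈ (R j).tail := by
            rcases eq_or_ne m₁ [] with rfl | hm₁
            · rw [heqR]; simpa using hu2
            · obtain ⟨c, q, rfl⟩ := exists_cons_of_ne_nil hm₁
              rw [heqR]
              simp only [cons_append, tail_cons]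
              exact mem_append_right _ (mem_cons_of_mem _ hu2)
          exact hRtailTy j u hutail (by simp [huS'])
      obtain ⟨p', hp'ne, hp'nd, hp'ch, hp'h, hp'l, hp'mem⟩ :=
        MengerAux.walk_to_path D' walk.length walk le_rfl hwne hchw
      refine hS.2 ⟨p', ⟨hp'ne, hp'nd, hp'ch⟩, by rw [hp'h, hwhead], ?_, α j, hαA j, ?_⟩
      · intro z' hz' hz'S
        exact havoid z' (hp'mem z' hz') (by simpa using hz'S)
      · rw [hp'l, hwlast]; exact hRlast j
    -- matching σ and gluing
    obtain ⟨jx, hjx⟩ := hτsurj y (Finset.mem_insert_self _ _)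
    have hfactB : ∀ i z, z ∈ R i → z ∈ S → z = τ i :=
      fun i z hz hzS => hRTy i z hz (Finset.mem_insert_of_mem hzS)
    set σ : Fin k → Fin k := fun i =>
      if h : ε i ∈ S then Classical.choose (hτsurj (ε i) (Finset.mem_insert_of_mem h))
      else jx with hσdef
    have hσS : ∀ i, ε i ∈ S → τ (σ i) = ε i := by
      intro i h
      simp only [hσdef, dif_pos h]
      exact Classical.choose_spec (hτsurj (ε i) (Finset.mem_insert_of_mem h))
    have hσx : ∀ i, ε i ∉ S → σ i = jx ∧ ε i = x := by
      intro i h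
      refine ⟨by simp [hσdef, dif_neg h], ?_⟩
      rcases Finset.mem_insert.mp (hεTx i) with h' | h'
      · exact h'
      · exact absurd h' h
    have hσinj : Function.Injective σ := by
      intro i i' h
      by_cases hi : ε i ∈ S <;> by_cases hi' : ε i' ∈ S
      · exact hεinj (by rw [← hσS i hi, ← hσS i' hi', h])
      · exfalso
        have h1 : τ (σ i) = ε i := hσS i hi
        have h2 : σ i' = jx := (hσx i' hi').1
        rw [h, h2, hjx] at h1
        exact hyS (h1 ▸ hi)
      · exfalso
        have h1 : τ (σ i') = ε i' := hσS i' hi'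
        have h2 : σ i = jx := (hσx i hi).1
        rw [← h, h2, hjx] at h1
        exact hyS (h1 ▸ hi')
      · exact hεinj ((hσx i hi).2.trans (hσx i' hi').2.symm)
    set G : Fin k → List V := fun i =>
      if ε i ∈ S then P i ++ (R (σ i)).tail else P i ++ R (σ i) with hGdef
    have hGmem : ∀ i z, z ∈ G i → z ∈ P i ∨ z ∈ R (σ i) := by
      intro i z hz
      simp only [hGdef] at hz
      split at hz
      · rcases mem_append.mp hz with h | h
        · exact Or.inl h
        · exact Or.inr (mem_of_mem_tail h)
      · exact mem_append.mp hz
    have hGprops : ∀ i, Paper.IsDipathList D (G i) ∧ (G i).head? = some v ∧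
        ∃ a ∈ A, (G i).getLast? = some a := by
      intro i
      have hchP : Chain' D (P i) := (hPch i).imp (fun _ _ h => h.1)
      have hPheadi := hPhead i
      by_cases hi : ε i ∈ S
      · have hj : τ (σ i) = ε i := hσS i hi
        have hGi : G i = P i ++ (R (σ i)).tail := by simp [hGdef, hi]
        have hchtail : Chain' D (R (σ i)).tail :=
          ((hRch (σ i)).tail).imp (fun _ _ h => h.1)
        have hjunc : ∀ a₁ ∈ (P i).getLast?, ∀ b₁ ∈ (R (σ i)).tail.head?, D a₁ b₁ := by
          intro a₁ ha₁ b₁ hb₁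
          rw [hPlast i] at ha₁
          have ha₁' : a₁ = ε i := by
            simp only [Option.mem_def, Option.some_inj] at ha₁
            exact ha₁.symm
          have hch2 : Chain' D' (R (σ i)) := hRch (σ i)
          rw [hRcons (σ i)] at hch2
          have := (chain'_cons'.mp hch2).1 b₁ hb₁
          rw [ha₁', ← hj]
          exact this.1
        have hdisj2 : List.Disjoint (P i) (R (σ i)).tail := by
          intro u hu hu2
          have huR : u ∈ R (σ i) := by
            rw [hRcons (σ i)]; exact mem_cons_of_mem _ hu2
          have huS : u ∈ S := hcross i (σ i) u hu huR
          have := hfactB (σ i) u huR huS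
          exact hτtail (σ i) (this ▸ hu2)
        refine ⟨⟨by simp [hGi, hPne i], ?_, ?_⟩, ?_, ?_⟩
        · rw [hGi, nodup_append]
          exact ⟨hPnd i, (hRnd (σ i)).sublist (tail_sublist _), fun a ha b hb hab => hdisj2 ha (hab ▸ hb)⟩
        · rw [hGi, chain'_append]
          exact ⟨hchP, hchtail, hjunc⟩
        · rw [hGi, head?_append, Option.or_of_isSome (by rw [isSome_head?]; exact hPne i),
            hPheadi]
        · rcases eq_or_ne (R (σ i)).tail [] with htl | htl
          · refine ⟨α (σ i), hαA (σ i), ?_⟩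
            have hR1 : R (σ i) = [τ (σ i)] := by rw [hRcons (σ i), htl]
            have hατ : α (σ i) = τ (σ i) := by
              have hlast := hRlast (σ i)
              rw [hR1] at hlast
              have : τ (σ i) = α (σ i) := by simpa using hlast
              exact this.symm
            rw [hGi, htl, append_nil, hPlast i, hατ, hj]
          · refine ⟨α (σ i), hαA (σ i), ?_⟩
            rw [hGi, getLast?_append, Option.or_of_isSome (by rwa [getLast?_isSome]),
              ← MengerAux.getLast?_cons_of_ne_nil (τ (σ i)) htl, ← hRcons (σ i)]
            exact hRlast (σ i)
      · obtain ⟨hσi, hεx⟩ := hσx i hi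
        have hGi : G i = P i ++ R (σ i) := by simp [hGdef, hi]
        have hchR2 : Chain' D (R (σ i)) := (hRch (σ i)).imp (fun _ _ h => h.1)
        have hjunc : ∀ a₁ ∈ (P i).getLast?, ∀ b₁ ∈ (R (σ i)).head?, D a₁ b₁ := by
          intro a₁ ha₁ b₁ hb₁
          rw [hPlast i] at ha₁
          rw [hσi, hτhead jx] at hb₁
          have ha₁' : a₁ = ε i := by
            simp only [Option.mem_def, Option.some_inj] at ha₁
            exact ha₁.symm
          have hb₁' : b₁ = τ jx := by
            simp only [Option.mem_def, Option.some_inj] at hb₁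
            exact hb₁.symm
          rw [ha₁', hb₁', hεx, hjx]
          exact hxy
        have hdisj2 : List.Disjoint (P i) (R (σ i)) := by
          intro u hu hu2
          have huS : u ∈ S := hcross i (σ i) u hu hu2
          have := hfactA i u hu huS
          rw [this, hεx] at huS
          exact hxS huS
        refine ⟨⟨by simp [hGi, hPne i], ?_, ?_⟩, ?_, ?_⟩
        · rw [hGi, nodup_append]
          exact ⟨hPnd i, hRnd (σ i), fun a ha b hb hab => hdisj2 ha (hab ▸ hb)⟩
        · rw [hGi, chain'_append]
          exact ⟨hchP, hchR2, hjunc⟩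
        · rw [hGi, head?_append, Option.or_of_isSome (by rw [isSome_head?]; exact hPne i),
            hPheadi]
        · refine ⟨α (σ i), hαA (σ i), ?_⟩
          rw [hGi, getLast?_append,
            Option.or_of_isSome (by rw [getLast?_isSome]; exact hRne (σ i))]
          exact hRlast (σ i)
    have hGdisj : ∀ i i', i ≠ i' → ∀ z ∈ G i, z ∈ G i' → z = v := by
      intro i i' hii' z hzi hzi'
      rcases hGmem i z hzi with h1 | h1 <;> rcases hGmem i' z hzi' with h2 | h2
      · exact hPdisj i i' hii' z h1 h2
      · exfalso
        have hzS : z ∈ S := hcross i (σ i') z h1 h2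
        have hzε : z = ε i := hfactA i z h1 hzS
        have hzτ : z = τ (σ i') := hfactB (σ i') z h2 hzS
        by_cases hi' : ε i' ∈ S
        · exact hii' (hεinj (hzε.symm.trans (hzτ.trans (hσS i' hi'))))
        · rw [(hσx i' hi').1, hjx] at hzτ
          exact hyS (hzτ ▸ hzS)
      · exfalso
        have hzS : z ∈ S := hcross i' (σ i) z h2 h1
        have hzε : z = ε i' := hfactA i' z h2 hzS
        have hzτ : z = τ (σ i) := hfactB (σ i) z h1 hzS
        by_cases hi : ε i ∈ S
        · exact hii' (hεinj ((hzτ.trans (hσS i hi)).symm.trans hzε))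
        · rw [(hσx i hi).1, hjx] at hzτ
          exact hyS (hzτ ▸ hzS)
      · exact absurd h2 (hRdisj (σ i) (σ i') (fun h => hii' (hσinj h)) z h1)
    exact ⟨G, hGprops, hGdisj⟩

end MengerProof

namespace Paper

/-- (Menger, set version.) For a vertex `v`, a set `A ⊆ V ∖ {v}` and
`k ∈ ℕ`: either there are `k` (distinct) `v`-`A`-dipaths pairwise intersecting only at
`v`, or there is a set `K ⊆ V ∖ {v}` with `|K| < k` such that `D − K` has no directed
path starting at `v` and ending in `A`. -/
theorem stmt_16 {V : Type*} [Fintype V] (D : V → V → Prop) (hloop : ∀ v, ¬ D v v)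
    (v : V) (A : Set V) (hA : v ∉ A) (k : ℕ) :
    (∃ P : Fin k → List V,
      (∀ i, IsDipathList D (P i) ∧ (P i).head? = some v ∧
        (∃ a ∈ A, (P i).getLast? = some a) ∧
        (∀ x ∈ (P i).tail.dropLast, x ∉ A)) ∧
      (∀ i j, i ≠ j → ∀ x ∈ P i, x ∈ P j → x = v)) ∨
    (∃ K : Finset V, v ∉ K ∧ K.card < k ∧
      ¬ ∃ P : List V, IsDipathList D P ∧ P.head? = some v ∧
        (∀ x ∈ P, x ∉ K) ∧ ∃ a ∈ A, P.getLast? = some a) := by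
  classical
  by_cases hex : ∃ K : Finset V, v ∉ K ∧ K.card < k ∧
      ¬ ∃ P : List V, IsDipathList D P ∧ P.head? = some v ∧
        (∀ x ∈ P, x ∉ K) ∧ ∃ a ∈ A, P.getLast? = some a
  · exact Or.inr hex
  · left
    have hsep : ∀ K : Finset V, MengerProof.Sep D v A K → k ≤ K.card := by
      rintro K ⟨h1, h2⟩
      by_contra h
      exact hex ⟨K, h1, by omega, h2⟩
    obtain ⟨G, hG, hGdisj⟩ := MengerProof.exists_system v k _ D hloop le_rfl A hA hsep
    have htr : ∀ i, ∃ (q : List V) (b : V), (∀ z ∈ q, z ∈ G i) ∧ q ≠ [] ∧ q.Nodup ∧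
        q.Chain' D ∧ q.head? = some v ∧ q.getLast? = some b ∧ b ∈ A ∧
        ∀ z ∈ q.dropLast, z ∉ A := by
      intro i
      obtain ⟨⟨hne, hnd, hch⟩, hh, a, haA, hl⟩ := hG i
      obtain ⟨q, l₂, b, heq, hqne, hqlast, hbT, hqhead, hqdrop⟩ :=
        MengerAux.first_hit A (G i) ⟨a, List.mem_of_mem_getLast? (by rw [hl]; rfl), haA⟩
      exact ⟨q, b, fun z hz => heq ▸ List.mem_append_left _ hz, hqne,
        (List.nodup_append.mp (heq ▸ hnd)).1, (List.chain'_append.mp (heq ▸ hch)).1,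
        hqhead.trans hh, hqlast, hbT, hqdrop⟩
    choose q b hsub hne hnd hch hhead hlast hbA hdrop using htr
    refine ⟨q, fun i => ⟨⟨hne i, hnd i, hch i⟩, hhead i, ⟨b i, hbA i, hlast i⟩, ?_⟩, ?_⟩
    · intro z hz
      exact hdrop i z (MengerAux.mem_dropLast_of_mem_tail_dropLast hz)
    · intro i j hij z hzi hzj
      exact hGdisj i j hij z (hsub i z hzi) (hsub j z hzj)

end Paper
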